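/- The homomorphisms Δ^υ_{μν} : U_q(μ,ν) → U_q(μ,υ)⊗U_q(υ,ν) satisfy generalized coassociativity: (Δ^ω_{μυ} ⊗ id) ∘ Δ^υ_{μν} = (id ⊗ Δ^υ_{ων}) ∘ Δ^ω_{μν} for all real μ, ν, υ, ω. -/

import Mathlib

open scoped TensorProduct

/-- Generators of the algebra U_q(μ,ν). -/
inductive UqGen : Type
  | K | Kinv | E | F

/-- λ = (q − q⁻¹)⁻¹. -/
noncomputable def lamq (q : ℝ) : ℝ := (q - q⁻¹)⁻¹

/-- The defining relations of U_q(μ,ν): K⁻¹K = 1 = KK⁻¹, KE = qEK, KF = q⁻¹FK,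
EF − FE = λ(μK² − νK⁻²). -/
inductive UqRel (q μ ν : ℝ) : FreeAlgebra ℂ UqGen → FreeAlgebra ℂ UqGen → Prop
  | inv_left : UqRel q μ ν (FreeAlgebra.ι ℂ UqGen.Kinv * FreeAlgebra.ι ℂ UqGen.K) 1
  | inv_right : UqRel q μ ν (FreeAlgebra.ι ℂ UqGen.K * FreeAlgebra.ι ℂ UqGen.Kinv) 1
  | KE : UqRel q μ ν (FreeAlgebra.ι ℂ UqGen.K * FreeAlgebra.ι ℂ UqGen.E)
      ((q : ℂ) • (FreeAlgebra.ι ℂ UqGen.E * FreeAlgebra.ι ℂ UqGen.K))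
  | KF : UqRel q μ ν (FreeAlgebra.ι ℂ UqGen.K * FreeAlgebra.ι ℂ UqGen.F)
      (((q⁻¹ : ℝ) : ℂ) • (FreeAlgebra.ι ℂ UqGen.F * FreeAlgebra.ι ℂ UqGen.K))
  | EF : UqRel q μ ν
      (FreeAlgebra.ι ℂ UqGen.E * FreeAlgebra.ι ℂ UqGen.F -
        FreeAlgebra.ι ℂ UqGen.F * FreeAlgebra.ι ℂ UqGen.E)
      ((lamq q : ℂ) • ((μ : ℂ) • (FreeAlgebra.ι ℂ UqGen.K * FreeAlgebra.ι ℂ UqGen.K) -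
        (ν : ℂ) • (FreeAlgebra.ι ℂ UqGen.Kinv * FreeAlgebra.ι ℂ UqGen.Kinv)))

/-- The universal unital ℂ-algebra U_q(μ,ν). -/
noncomputable def Uq (q μ ν : ℝ) : Type := RingQuot (UqRel q μ ν)

noncomputable instance (q μ ν : ℝ) : Ring (Uq q μ ν) :=
  inferInstanceAs (Ring (RingQuot (UqRel q μ ν)))

noncomputable instance (q μ ν : ℝ) : Algebra ℂ (Uq q μ ν) :=
  inferInstanceAs (Algebra ℂ (RingQuot (UqRel q μ ν)))

/-- The generator K of U_q(μ,ν). -/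
noncomputable def UqK (q μ ν : ℝ) : Uq q μ ν :=
  RingQuot.mkAlgHom ℂ (UqRel q μ ν) (FreeAlgebra.ι ℂ UqGen.K)

/-- The generator K⁻¹ of U_q(μ,ν). -/
noncomputable def UqKinv (q μ ν : ℝ) : Uq q μ ν :=
  RingQuot.mkAlgHom ℂ (UqRel q μ ν) (FreeAlgebra.ι ℂ UqGen.Kinv)

/-- The generator E of U_q(μ,ν). -/
noncomputable def UqE (q μ ν : ℝ) : Uq q μ ν :=
  RingQuot.mkAlgHom ℂ (UqRel q μ ν) (FreeAlgebra.ι ℂ UqGen.E)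

/-- The generator F of U_q(μ,ν). -/
noncomputable def UqF (q μ ν : ℝ) : Uq q μ ν :=
  RingQuot.mkAlgHom ℂ (UqRel q μ ν) (FreeAlgebra.ι ℂ UqGen.F)


set_option maxHeartbeats 1000000 in
set_option synthInstance.maxHeartbeats 400000 in
/-- the comultiplications Δ^υ_{μν} : U_q(μ,ν) → U_q(μ,υ)⊗U_q(υ,ν)
(characterized by their values on the generators) satisfy generalized coassociativity:
(Δ^ω_{μυ} ⊗ id) ∘ Δ^υ_{μν} = (id ⊗ Δ^υ_{ων}) ∘ Δ^ω_{μν} (up to the associativity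
isomorphism of the tensor product). -/
theorem Uq_generalized_coassociativity
    (q : ℝ) (hq0 : 0 < q) (hq1 : q < 1) (μ ν υ ω : ℝ)
    (Δμν_υ : Uq q μ ν →ₐ[ℂ] (Uq q μ υ ⊗[ℂ] Uq q υ ν))
    (Δμν_ω : Uq q μ ν →ₐ[ℂ] (Uq q μ ω ⊗[ℂ] Uq q ω ν))
    (Δμυ_ω : Uq q μ υ →ₐ[ℂ] (Uq q μ ω ⊗[ℂ] Uq q ω υ))
    (Δων_υ : Uq q ω ν →ₐ[ℂ] (Uq q ω υ ⊗[ℂ] Uq q υ ν))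
    (h1E : Δμν_υ (UqE q μ ν) = UqE q μ υ ⊗ₜ[ℂ] UqK q υ ν + UqKinv q μ υ ⊗ₜ[ℂ] UqE q υ ν)
    (h1F : Δμν_υ (UqF q μ ν) = UqF q μ υ ⊗ₜ[ℂ] UqK q υ ν + UqKinv q μ υ ⊗ₜ[ℂ] UqF q υ ν)
    (h1K : Δμν_υ (UqK q μ ν) = UqK q μ υ ⊗ₜ[ℂ] UqK q υ ν)
    (h1Kinv : Δμν_υ (UqKinv q μ ν) = UqKinv q μ υ ⊗ₜ[ℂ] UqKinv q υ ν)
    (h2E : Δμν_ω (UqE q μ ν) = UqE q μ ω ⊗ₜ[ℂ] UqK q ω ν + UqKinv q μ ω ⊗ₜ[ℂ] UqE q ω ν)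
    (h2F : Δμν_ω (UqF q μ ν) = UqF q μ ω ⊗ₜ[ℂ] UqK q ω ν + UqKinv q μ ω ⊗ₜ[ℂ] UqF q ω ν)
    (h2K : Δμν_ω (UqK q μ ν) = UqK q μ ω ⊗ₜ[ℂ] UqK q ω ν)
    (h2Kinv : Δμν_ω (UqKinv q μ ν) = UqKinv q μ ω ⊗ₜ[ℂ] UqKinv q ω ν)
    (h3E : Δμυ_ω (UqE q μ υ) = UqE q μ ω ⊗ₜ[ℂ] UqK q ω υ + UqKinv q μ ω ⊗ₜ[ℂ] UqE q ω υ)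
    (h3F : Δμυ_ω (UqF q μ υ) = UqF q μ ω ⊗ₜ[ℂ] UqK q ω υ + UqKinv q μ ω ⊗ₜ[ℂ] UqF q ω υ)
    (h3K : Δμυ_ω (UqK q μ υ) = UqK q μ ω ⊗ₜ[ℂ] UqK q ω υ)
    (h3Kinv : Δμυ_ω (UqKinv q μ υ) = UqKinv q μ ω ⊗ₜ[ℂ] UqKinv q ω υ)
    (h4E : Δων_υ (UqE q ω ν) = UqE q ω υ ⊗ₜ[ℂ] UqK q υ ν + UqKinv q ω υ ⊗ₜ[ℂ] UqE q υ ν)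
    (h4F : Δων_υ (UqF q ω ν) = UqF q ω υ ⊗ₜ[ℂ] UqK q υ ν + UqKinv q ω υ ⊗ₜ[ℂ] UqF q υ ν)
    (h4K : Δων_υ (UqK q ω ν) = UqK q ω υ ⊗ₜ[ℂ] UqK q υ ν)
    (h4Kinv : Δων_υ (UqKinv q ω ν) = UqKinv q ω υ ⊗ₜ[ℂ] UqKinv q υ ν) :
    ∀ x : Uq q μ ν,
      (Algebra.TensorProduct.assoc ℂ ℂ ℂ (Uq q μ ω) (Uq q ω υ) (Uq q υ ν))
        ((Algebra.TensorProduct.map Δμυ_ω (AlgHom.id ℂ (Uq q υ ν))) (Δμν_υ x))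
      = (Algebra.TensorProduct.map (AlgHom.id ℂ (Uq q μ ω)) Δων_υ) (Δμν_ω x) := by
  set L : Uq q μ ν →ₐ[ℂ] (Uq q μ ω ⊗[ℂ] (Uq q ω υ ⊗[ℂ] Uq q υ ν)) :=
    ((Algebra.TensorProduct.assoc ℂ ℂ ℂ (Uq q μ ω) (Uq q ω υ) (Uq q υ ν)).toAlgHom).comp
      ((Algebra.TensorProduct.map Δμυ_ω (AlgHom.id ℂ (Uq q υ ν))).comp Δμν_υ) with hL
  set R : Uq q μ ν →ₐ[ℂ] _ :=
    (Algebra.TensorProduct.map (AlgHom.id ℂ (Uq q μ ω)) Δων_υ).comp Δμν_ω with hR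
  have key : ∀ x, L x = R x := by
    intro x
    obtain ⟨y, rfl⟩ := RingQuot.mkAlgHom_surjective ℂ (UqRel q μ ν) x
    induction y using FreeAlgebra.induction with
    | grade0 r =>
        rw [show (RingQuot.mkAlgHom ℂ (UqRel q μ ν)) ((algebraMap ℂ (FreeAlgebra ℂ UqGen)) r)
            = algebraMap ℂ (Uq q μ ν) r from (RingQuot.mkAlgHom ℂ (UqRel q μ ν)).commutes r,
          L.commutes, R.commutes]
    | grade1 g =>
        cases g <;>
          simp only [hL, hR, AlgHom.coe_comp, Function.comp_apply,
            AlgEquiv.toAlgHom_eq_coe, AlgEquiv.coe_algHom, AlgHom.coe_coe, map_add,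
            AlgHom.id_apply,
            show RingQuot.mkAlgHom ℂ (UqRel q μ ν) (FreeAlgebra.ι ℂ UqGen.K) = UqK q μ ν from rfl,
            show RingQuot.mkAlgHom ℂ (UqRel q μ ν) (FreeAlgebra.ι ℂ UqGen.Kinv) = UqKinv q μ ν from rfl,
            show RingQuot.mkAlgHom ℂ (UqRel q μ ν) (FreeAlgebra.ι ℂ UqGen.E) = UqE q μ ν from rfl,
            show RingQuot.mkAlgHom ℂ (UqRel q μ ν) (FreeAlgebra.ι ℂ UqGen.F) = UqF q μ ν from rfl,
            h1E, h1F, h1K, h1Kinv, h2E, h2F, h2K, h2Kinv,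
            h3E, h3F, h3K, h3Kinv, h4E, h4F, h4K, h4Kinv,
            Algebra.TensorProduct.map_tmul, Algebra.TensorProduct.assoc_tmul,
            TensorProduct.add_tmul, TensorProduct.tmul_add, add_assoc]
    | mul a b ha hb => simp only [map_mul]; erw [map_mul L, map_mul R, ha, hb]
    | add a b ha hb => simp only [map_add]; erw [map_add L, map_add R, ha, hb]
  intro x
  simpa [L, R] using key x
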